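/- For every t>0 and S>0, the gamma of the Black–Scholes formula is ∂_{SS} 𝓑𝓢(t,S) = e^{−(r−r_R)t} φ(ζ₁)/(S σ √t), where φ(x) = (1/√(2π)) e^{−x²/2} is the standard normal density; consequently, for each fixed t>0, lim_{S→∞} ∂_{SS} 𝓑𝓢(t,S) = 0, i.e. the linearity (vanishing second derivative) boundary condition holds in the limit S → ∞. -/

import Mathlib

/-- Standard normal cumulative distribution function. -/
noncomputable def Phi (x : ℝ) : ℝ :=
  (Real.sqrt (2 * Real.pi))⁻¹ * ∫ u in Set.Iic x, Real.exp (-u ^ 2 / 2)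

/-- `ζ₁ = (log(S/K) + (r_R + σ²/2)t)/(σ√t)`. -/
noncomputable def zeta1 (σ K r_R t S : ℝ) : ℝ :=
  (Real.log (S / K) + (r_R + σ ^ 2 / 2) * t) / (σ * Real.sqrt t)

/-- `ζ₂ = ζ₁ − σ√t`. -/
noncomputable def zeta2 (σ K r_R t S : ℝ) : ℝ :=
  zeta1 σ K r_R t S - σ * Real.sqrt t

/-- The Black–Scholes formula
`𝓑𝓢(t,S) = α S e^{−(r−r_R)t} Φ(αζ₁) − α K e^{−rt} Φ(αζ₂)` (t = time to maturity). -/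
noncomputable def BS (σ K r r_R α t S : ℝ) : ℝ :=
  α * S * Real.exp (-(r - r_R) * t) * Phi (α * zeta1 σ K r_R t S)
    - α * K * Real.exp (-r * t) * Phi (α * zeta2 σ K r_R t S)

/-- Standard normal density `φ(x) = (1/√(2π)) e^{−x²/2}`. -/
noncomputable def phi (x : ℝ) : ℝ :=
  (Real.sqrt (2 * Real.pi))⁻¹ * Real.exp (-x ^ 2 / 2)

open Real MeasureTheory Filter Set

lemma gauss_integrable : Integrable (fun u : ℝ => Real.exp (-u ^ 2 / 2)) := by
  have h := integrable_exp_neg_mul_sq (show (0:ℝ) < 1/2 by norm_num)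
  have e : (fun u : ℝ => Real.exp (-u ^ 2 / 2)) = fun u : ℝ => Real.exp (-(1/2) * u ^ 2) := by
    funext u; congr 1; ring
  rw [e]; exact h

lemma gauss_cont : Continuous (fun u : ℝ => Real.exp (-u ^ 2 / 2)) := by
  continuity

lemma hasDerivAt_Phi (x : ℝ) : HasDerivAt Phi (phi x) x := by
  set g : ℝ → ℝ := fun u => Real.exp (-u ^ 2 / 2) with hg
  have hint := gauss_integrable
  have key : ∀ y : ℝ, Phi y
      = (Real.sqrt (2 * Real.pi))⁻¹ * ((∫ u in Iic (0:ℝ), g u) + ∫ u in (0:ℝ)..y, g u) := by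
    intro y
    unfold Phi
    rw [← intervalIntegral.integral_Iic_sub_Iic hint.integrableOn hint.integrableOn]
    ring
  have h1 : HasDerivAt (fun y => ∫ u in (0:ℝ)..y, g u) (g x) x :=
    intervalIntegral.integral_hasDerivAt_right hint.intervalIntegrable
      (gauss_cont.stronglyMeasurable.stronglyMeasurableAtFilter) gauss_cont.continuousAt
  have h2 := ((h1.const_add (∫ u in Iic (0:ℝ), g u)).const_mul (Real.sqrt (2 * Real.pi))⁻¹)
  have hfun : Phi = fun y => (Real.sqrt (2 * Real.pi))⁻¹ * ((∫ u in Iic (0:ℝ), g u) + ∫ u in (0:ℝ)..y, g u) :=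
    funext key
  rw [hfun]
  exact h2

lemma phi_alpha {α : ℝ} (hα : α = 1 ∨ α = -1) (x : ℝ) : phi (α * x) = phi x := by
  rcases hα with rfl | rfl
  · simp
  · unfold phi; congr 2; ring

lemma key_identity {σ K r r_R t S : ℝ} (hσ : 0 < σ) (hK : 0 < K) (ht : 0 < t) (hS : 0 < S) :
    S * Real.exp (-(r - r_R) * t) * phi (zeta1 σ K r_R t S)
      = K * Real.exp (-r * t) * phi (zeta2 σ K r_R t S) := by
  have hst : (0:ℝ) < σ * Real.sqrt t := mul_pos hσ (Real.sqrt_pos.2 ht)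
  have hz : zeta1 σ K r_R t S * (σ * Real.sqrt t)
      = Real.log (S / K) + (r_R + σ ^ 2 / 2) * t := div_mul_cancel₀ _ hst.ne'
  have hsq : (Real.sqrt t) ^ 2 = t := Real.sq_sqrt ht.le
  have hS' : S = K * Real.exp (Real.log (S / K)) := by
    rw [Real.exp_log (div_pos hS hK)]; field_simp
  have e : Real.exp (Real.log (S / K)) * Real.exp (-(r - r_R) * t)
        * Real.exp (-(zeta1 σ K r_R t S) ^ 2 / 2)
      = Real.exp (-r * t) * Real.exp (-(zeta1 σ K r_R t S - σ * Real.sqrt t) ^ 2 / 2) := by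
    rw [← Real.exp_add, ← Real.exp_add, ← Real.exp_add]
    congr 1
    linear_combination (σ ^ 2 / 2) * hsq - hz
  unfold phi zeta2
  set z := zeta1 σ K r_R t S with hzdef
  rw [hS']
  linear_combination K * (Real.sqrt (2 * Real.pi))⁻¹ * e

lemma hasDerivAt_zeta1 {σ K r_R t S : ℝ} (hK : 0 < K) (hS : 0 < S) :
    HasDerivAt (fun s => zeta1 σ K r_R t s) (S⁻¹ / (σ * Real.sqrt t)) S := by
  have hlog : HasDerivAt (fun s : ℝ => Real.log (s / K)) S⁻¹ S := by
    have h := (Real.hasDerivAt_log (div_ne_zero hS.ne' hK.ne')).comp S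
      ((hasDerivAt_id S).div_const K)
    have := hK.ne'; have := hS.ne'
    rw [show S⁻¹ = (S / K)⁻¹ * (1 / K) by field_simp]
    exact h
  exact (hlog.add_const _).div_const _

lemma hasDerivAt_BS {σ K r r_R α t S : ℝ} (hσ : 0 < σ) (hK : 0 < K)
    (hα : α = 1 ∨ α = -1) (ht : 0 < t) (hS : 0 < S) :
    HasDerivAt (fun s => BS σ K r r_R α t s)
      (α * Real.exp (-(r - r_R) * t) * Phi (α * zeta1 σ K r_R t S)) S := by
  have hst : (0:ℝ) < σ * Real.sqrt t := mul_pos hσ (Real.sqrt_pos.2 ht)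
  set d : ℝ := S⁻¹ / (σ * Real.sqrt t) with hd
  have hz1 := hasDerivAt_zeta1 (σ := σ) (r_R := r_R) (t := t) hK hS
  have hz2 : HasDerivAt (fun s => zeta2 σ K r_R t s) d S := by
    unfold zeta2; exact hz1.sub_const _
  have hP1 : HasDerivAt (fun s => Phi (α * zeta1 σ K r_R t s))
      (phi (α * zeta1 σ K r_R t S) * (α * d)) S :=
    (hasDerivAt_Phi _).comp S (hz1.const_mul α)
  have hP2 : HasDerivAt (fun s => Phi (α * zeta2 σ K r_R t s))
      (phi (α * zeta2 σ K r_R t S) * (α * d)) S :=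
    (hasDerivAt_Phi _).comp S (hz2.const_mul α)
  have hF : HasDerivAt
      (fun s => (α * Real.exp (-(r - r_R) * t)) * (s * Phi (α * zeta1 σ K r_R t s))
        - (α * K * Real.exp (-r * t)) * Phi (α * zeta2 σ K r_R t s))
      ((α * Real.exp (-(r - r_R) * t)) * (1 * Phi (α * zeta1 σ K r_R t S)
          + S * (phi (α * zeta1 σ K r_R t S) * (α * d)))
        - (α * K * Real.exp (-r * t)) * (phi (α * zeta2 σ K r_R t S) * (α * d))) S :=
    (((hasDerivAt_id S).mul hP1).const_mul _).sub (hP2.const_mul _)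
  have hBSfun : (fun s => BS σ K r r_R α t s)
      = fun s => (α * Real.exp (-(r - r_R) * t)) * (s * Phi (α * zeta1 σ K r_R t s))
        - (α * K * Real.exp (-r * t)) * Phi (α * zeta2 σ K r_R t s) := by
    funext s; unfold BS; ring
  rw [hBSfun]
  convert hF using 1
  have hα2 : α * α = 1 := by rcases hα with rfl | rfl <;> norm_num
  have hk := key_identity (r := r) (r_R := r_R) hσ hK ht hS
  rw [phi_alpha hα, phi_alpha hα]
  linear_combination (-(α * α * d)) * hk

/-- The gamma of the Black–Scholes formula is
`∂_{SS} 𝓑𝓢(t,S) = e^{−(r−r_R)t} φ(ζ₁)/(S σ √t)`, and consequently, for fixed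
`t>0`, it tends to `0` as `S → ∞` (linearity boundary condition). -/
theorem BS_gamma_and_linearity
    (σ K r r_R α : ℝ) (hσ : 0 < σ) (hK : 0 < K) (hα : α = 1 ∨ α = -1) :
    (∀ t > (0 : ℝ), ∀ S > (0 : ℝ),
      deriv (deriv (fun s => BS σ K r r_R α t s)) S
        = Real.exp (-(r - r_R) * t) * phi (zeta1 σ K r_R t S)
            / (S * σ * Real.sqrt t)) ∧
    (∀ t > (0 : ℝ),
      Filter.Tendsto (fun S => deriv (deriv (fun s => BS σ K r r_R α t s)) S)
        Filter.atTop (nhds 0)) := by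
  have main : ∀ t > (0 : ℝ), ∀ S > (0 : ℝ),
      deriv (deriv (fun s => BS σ K r r_R α t s)) S
        = Real.exp (-(r - r_R) * t) * phi (zeta1 σ K r_R t S) / (S * σ * Real.sqrt t) := by
    intro t ht S hS
    have hst : (0:ℝ) < σ * Real.sqrt t := mul_pos hσ (Real.sqrt_pos.2 ht)
    have hev : deriv (fun s => BS σ K r r_R α t s)
        =ᶠ[nhds S] fun s => α * Real.exp (-(r - r_R) * t) * Phi (α * zeta1 σ K r_R t s) := by
      filter_upwards [Ioi_mem_nhds hS] with s hs
      exact (hasDerivAt_BS hσ hK hα ht hs).deriv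
    rw [Filter.EventuallyEq.deriv_eq hev]
    have hz1 := hasDerivAt_zeta1 (σ := σ) (r_R := r_R) (t := t) hK hS
    have hδ : HasDerivAt (fun s => α * Real.exp (-(r - r_R) * t) * Phi (α * zeta1 σ K r_R t s))
        ((α * Real.exp (-(r - r_R) * t)) * (phi (α * zeta1 σ K r_R t S) * (α * (S⁻¹ / (σ * Real.sqrt t))))) S := by
      have := ((hasDerivAt_Phi (α * zeta1 σ K r_R t S)).comp S (hz1.const_mul α)).const_mul
        (α * Real.exp (-(r - r_R) * t))
      exact this
    rw [hδ.deriv, phi_alpha hα]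
    rcases hα with rfl | rfl <;> field_simp
  refine ⟨main, fun t ht => ?_⟩
  have hst : (0:ℝ) < σ * Real.sqrt t := mul_pos hσ (Real.sqrt_pos.2 ht)
  have hev : (fun S => deriv (deriv (fun s => BS σ K r r_R α t s)) S)
      =ᶠ[atTop] fun S => Real.exp (-(r - r_R) * t) * (phi (zeta1 σ K r_R t S) * (S * (σ * Real.sqrt t))⁻¹) := by
    filter_upwards [eventually_gt_atTop (0:ℝ)] with S hS
    rw [main t ht S hS]
    rw [div_eq_mul_inv, mul_assoc, mul_assoc]
  rw [Filter.tendsto_congr' hev]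
  have hζ : Tendsto (fun S => zeta1 σ K r_R t S) atTop atTop := by
    unfold zeta1
    apply Tendsto.atTop_div_const hst
    apply tendsto_atTop_add_const_right
    exact Real.tendsto_log_atTop.comp (Tendsto.atTop_div_const hK tendsto_id)
  have hphi0 : Tendsto phi atTop (nhds 0) := by
    unfold phi
    have h1 : Tendsto (fun x : ℝ => -x ^ 2 / 2) atTop atBot := by
      apply Tendsto.atBot_div_const (by norm_num : (0:ℝ) < 2)
      exact tendsto_neg_atBot_iff.2 (tendsto_pow_atTop (by norm_num))
    have := (Real.tendsto_exp_atBot.comp h1).const_mul (Real.sqrt (2 * Real.pi))⁻¹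
    simpa using this
  have hinv : Tendsto (fun S : ℝ => (S * (σ * Real.sqrt t))⁻¹) atTop (nhds 0) := by
    apply Tendsto.inv_tendsto_atTop
    exact Tendsto.atTop_mul_const hst tendsto_id
  have := ((hphi0.comp hζ).mul hinv).const_mul (Real.exp (-(r - r_R) * t))
  simpa using this
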